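/- Let G be a finite group of order 4t and let I_G be the ideal of ℚ[x_{i,j} : (i,j) ∈ G × G] generated by: x_{i,j}² − 1 for all i,j ∈ G; x_{1,j} − 1 and x_{i,1} − 1 for all i,j ∈ G∖{1}; x_{i,j} − x_{ij,k}·x_{j,k}·x_{i,jk} for all i,j,k ∈ G; and Σ_{j∈G} x_{i,j} for all i ∈ G∖{1}. Then the number of normalized binary cocycles ψ over G whose cocyclic matrix M_ψ is Hadamard equals the dimension of ℚ[x_{i,j} : (i,j) ∈ G × G]/I_G as a ℚ-vector space. -/

import Mathlib

open Matrix MvPolynomial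

/-- The ideal `I_G` of Theorem 1. -/
noncomputable def hadamardIdeal (G : Type*) [Group G] [Fintype G] :
    Ideal (MvPolynomial (G × G) ℚ) :=
  Ideal.span
    ({p | ∃ i j : G, p = X (i, j) ^ 2 - 1} ∪
     {p | ∃ j : G, j ≠ 1 ∧ p = X ((1 : G), j) - 1} ∪
     {p | ∃ i : G, i ≠ 1 ∧ p = X (i, (1 : G)) - 1} ∪
     {p | ∃ i j k : G, p = X (i, j) - X (i * j, k) * X (j, k) * X (i, j * k)} ∪
     {p | ∃ i : G, i ≠ 1 ∧ p = ∑ j : G, X (i, j)})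

namespace HadamardAux

variable (G : Type*) [Group G] [Fintype G]

def genSet : Set (MvPolynomial (G × G) ℚ) :=
  ({p | ∃ i j : G, p = X (i, j) ^ 2 - 1} ∪
     {p | ∃ j : G, j ≠ 1 ∧ p = X ((1 : G), j) - 1} ∪
     {p | ∃ i : G, i ≠ 1 ∧ p = X (i, (1 : G)) - 1} ∪
     {p | ∃ i j k : G, p = X (i, j) - X (i * j, k) * X (j, k) * X (i, j * k)} ∪
     {p | ∃ i : G, i ≠ 1 ∧ p = ∑ j : G, X (i, j)})

lemma hadamardIdeal_eq : hadamardIdeal G = Ideal.span (genSet G) := rfl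

/-- the solution set -/
abbrev Sol : Type _ := {v : G × G → ℚ // ∀ p ∈ genSet G, aeval v p = 0}

variable {G}

lemma mem_gen1 (i j : G) : (X (i, j) ^ 2 - 1 : MvPolynomial (G × G) ℚ) ∈ genSet G :=
  Or.inl <| Or.inl <| Or.inl <| Or.inl ⟨i, j, rfl⟩

lemma mem_gen2 {j : G} (hj : j ≠ 1) : (X ((1 : G), j) - 1 : MvPolynomial (G × G) ℚ) ∈ genSet G :=
  Or.inl <| Or.inl <| Or.inl <| Or.inr ⟨j, hj, rfl⟩

lemma mem_gen3 {i : G} (hi : i ≠ 1) : (X (i, (1 : G)) - 1 : MvPolynomial (G × G) ℚ) ∈ genSet G :=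
  Or.inl <| Or.inl <| Or.inr ⟨i, hi, rfl⟩

lemma mem_gen4 (i j k : G) :
    (X (i, j) - X (i * j, k) * X (j, k) * X (i, j * k) : MvPolynomial (G × G) ℚ) ∈ genSet G :=
  Or.inl <| Or.inr ⟨i, j, k, rfl⟩

lemma mem_gen5 {i : G} (hi : i ≠ 1) :
    (∑ j : G, X (i, j) : MvPolynomial (G × G) ℚ) ∈ genSet G :=
  Or.inr ⟨i, hi, rfl⟩


set_option linter.unusedSectionVars false
variable {G : Type*} [Group G] [Fintype G] [DecidableEq G]

lemma sol_pm (v : Sol G) (i : G × G) : v.1 i = 1 ∨ v.1 i = -1 := by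
  have h := v.2 _ (mem_gen1 i.1 i.2)
  rw [Prod.mk.eta] at h
  simp only [map_sub, map_pow, aeval_X, _root_.map_one, sub_eq_zero] at h
  rw [sq] at h
  exact mul_self_eq_one_iff.mp h


noncomputable def chi (a : G × G → ℚ) : MvPolynomial (G × G) ℚ :=
  ∏ i : G × G, (C (2⁻¹ : ℚ) * (1 + C (a i) * X i))

lemma aeval_chi (a b : G × G → ℚ) :
    aeval b (chi a) = ∏ i : G × G, ((2⁻¹ : ℚ) * (1 + a i * b i)) := by
  simp [chi]

lemma aeval_chi_self {a : G × G → ℚ} (ha : ∀ i, a i = 1 ∨ a i = -1) :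
    aeval a (chi a) = 1 := by
  rw [aeval_chi, Finset.prod_eq_one]
  intro i _
  rcases ha i with h | h <;> rw [h] <;> norm_num

lemma aeval_chi_ne {a b : G × G → ℚ} (ha : ∀ i, a i = 1 ∨ a i = -1)
    (hb : ∀ i, b i = 1 ∨ b i = -1) (hab : a ≠ b) :
    aeval b (chi a) = 0 := by
  rw [aeval_chi]
  obtain ⟨i, hi⟩ := Function.ne_iff.mp hab
  refine Finset.prod_eq_zero (Finset.mem_univ i) ?_
  rcases ha i with h | h <;> rcases hb i with h' | h'
  · exact absurd (h.trans h'.symm) hi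
  · rw [h, h']; norm_num
  · rw [h, h']; norm_num
  · exact absurd (h.trans h'.symm) hi

variable (G) in
noncomputable def Jsq : Ideal (MvPolynomial (G × G) ℚ) :=
  Ideal.span {q | ∃ i : G × G, q = X i ^ 2 - 1}

lemma X_mul_chi_mem {a : G × G → ℚ} (ha : ∀ i, a i = 1 ∨ a i = -1) (i : G × G) :
    X i * chi a - C (a i) * chi a ∈ Jsq G := by
  have hsq : C (a i) ^ 2 = (1 : MvPolynomial (G × G) ℚ) := by
    rw [← C_pow]
    rcases ha i with h | h <;> rw [h] <;> norm_num
  have key : X i * chi a - C (a i) * chi a =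
      (C (2⁻¹ : ℚ) * C (a i) *
        ∏ j ∈ Finset.univ.erase i, (C (2⁻¹ : ℚ) * (1 + C (a j) * X j))) * (X i ^ 2 - 1) := by
    rw [chi, ← Finset.mul_prod_erase Finset.univ _ (Finset.mem_univ i)]
    set P := ∏ j ∈ Finset.univ.erase i, (C (2⁻¹ : ℚ) * (1 + C (a j) * X j)) with hP
    linear_combination (-(C (2⁻¹ : ℚ) * P * X i)) * hsq
  rw [key]
  exact Ideal.mul_mem_left _ _ (Ideal.subset_span ⟨i, rfl⟩)

lemma mul_chi_mem {a : G × G → ℚ} (ha : ∀ i, a i = 1 ∨ a i = -1)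
    (p : MvPolynomial (G × G) ℚ) :
    p * chi a - C (aeval a p) * chi a ∈ Jsq G := by
  induction p using MvPolynomial.induction_on with
  | C c => simp
  | add p q hp hq =>
      have := Ideal.add_mem _ hp hq
      convert this using 1
      rw [map_add, C_add]
      ring
  | mul_X p i hp =>
      have h2 := X_mul_chi_mem ha i
      have := Ideal.add_mem _ (Ideal.mul_mem_left _ (X i) hp)
        (Ideal.mul_mem_left _ (C (aeval a p)) h2)
      convert this using 1
      rw [_root_.map_mul, aeval_X, C_mul]
      ring

lemma sum_chi : (∑ s : G × G → Bool, chi (fun i => if s i then 1 else -1)) = 1 := by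
  rw [show (1 : MvPolynomial (G × G) ℚ) =
      ∏ i : G × G, ∑ b : Bool,
        (C (2⁻¹ : ℚ) * (1 + C (if b then (1:ℚ) else -1) * X i)) from ?_]
  · rw [Fintype.prod_sum]
    rfl
  · rw [Finset.prod_eq_one]
    intro i _
    rw [Fintype.sum_bool, if_pos rfl, if_neg (by decide), C_1, map_neg C, C_1]
    have h2 : (C (2⁻¹ : ℚ) : MvPolynomial (G × G) ℚ) * 2 = 1 := by
      rw [show (2 : MvPolynomial (G × G) ℚ) = C (2:ℚ) from (map_ofNat C 2).symm, ← C_mul]; norm_num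
    linear_combination h2

lemma interpolation (p : MvPolynomial (G × G) ℚ) :
    p - ∑ s : G × G → Bool,
        C (aeval (fun i => if s i then (1:ℚ) else -1) p) *
          chi (fun i => if s i then (1:ℚ) else -1) ∈ Jsq G := by
  have h2 : ∀ s : G × G → Bool,
      p * chi (fun i => if s i then (1:ℚ) else -1) -
        C (aeval (fun i => if s i then (1:ℚ) else -1) p) *
          chi (fun i => if s i then (1:ℚ) else -1) ∈ Jsq G :=
    fun s => mul_chi_mem (fun i => by by_cases h : s i <;> simp [h]) p
  have := Ideal.sum_mem (Jsq G) (fun s (_ : s ∈ Finset.univ) => h2 s)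
  convert this using 1
  rw [Finset.sum_sub_distrib, ← Finset.mul_sum, sum_chi, mul_one]


lemma Jsq_le : Jsq G ≤ Ideal.span (genSet G) := by
  rw [Jsq, Ideal.span_le]
  rintro q ⟨i, rfl⟩
  exact Ideal.subset_span (Prod.mk.eta (p := i) ▸ mem_gen1 i.1 i.2)

variable (G) in
noncomputable def ev : MvPolynomial (G × G) ℚ →ₐ[ℚ] (Sol G → ℚ) :=
  Pi.algHom ℚ _ fun v => aeval v.1

lemma ev_apply (p : MvPolynomial (G × G) ℚ) (v : Sol G) : ev G p v = aeval v.1 p := rfl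

lemma ker_ev : RingHom.ker (ev G) = Ideal.span (genSet G) := by
  apply le_antisymm
  · intro p hp
    have hp' : ∀ v : Sol G, aeval v.1 p = 0 := by
      intro v
      have := congrFun (RingHom.mem_ker.mp hp) v
      simpa [ev_apply] using this
    have hint := interpolation (G := G) p
    have hmem : ∀ s : G × G → Bool,
        C (aeval (fun i => if s i then (1:ℚ) else -1) p) *
          chi (fun i => if s i then (1:ℚ) else -1) ∈ Ideal.span (genSet G) := by
      intro s
      set a : G × G → ℚ := fun i => if s i then (1:ℚ) else -1 with ha'
      have ha : ∀ i, a i = 1 ∨ a i = -1 := fun i => by by_cases h : s i <;> simp [ha', h]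
      by_cases hs : ∀ q ∈ genSet G, aeval a q = 0
      · have : aeval a p = 0 := hp' ⟨a, hs⟩
        rw [this, map_zero, zero_mul]
        exact Ideal.zero_mem _
      · push_neg at hs
        obtain ⟨q, hq, hqa⟩ := hs
        have h1 : q * chi a - C (aeval a q) * chi a ∈ Ideal.span (genSet G) :=
          Jsq_le (mul_chi_mem ha q)
        have h2 : q * chi a ∈ Ideal.span (genSet G) :=
          Ideal.mul_mem_right _ _ (Ideal.subset_span hq)
        have h3 : C (aeval a q) * chi a ∈ Ideal.span (genSet G) := by
          have := Ideal.sub_mem _ h2 h1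
          simpa using this
        have h4 : chi a ∈ Ideal.span (genSet G) := by
          have := Ideal.mul_mem_left _ (C (aeval a q)⁻¹) h3
          rwa [← mul_assoc, ← C_mul, inv_mul_cancel₀ hqa, C_1, one_mul] at this
        exact Ideal.mul_mem_left _ _ h4
    have hsum : (∑ s : G × G → Bool,
        C (aeval (fun i => if s i then (1:ℚ) else -1) p) *
          chi (fun i => if s i then (1:ℚ) else -1)) ∈ Ideal.span (genSet G) :=
      Ideal.sum_mem _ (fun s _ => hmem s)
    have := Ideal.add_mem _ (Jsq_le hint) hsum
    simpa using this
  · rw [Ideal.span_le]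
    intro q hq
    rw [SetLike.mem_coe, RingHom.mem_ker]
    funext v
    exact v.2 q hq

lemma finite_sol : Finite (Sol G) := by
  let f : Sol G → (G × G → Prop) := fun v i => v.1 i = 1
  have hf : Function.Injective f := by
    intro v w h
    apply Subtype.ext; funext i
    have hi : (v.1 i = 1) = (w.1 i = 1) := congrFun h i
    rcases sol_pm v i with h1 | h1 <;> rcases sol_pm w i with h2 | h2
    · rw [h1, h2]
    · exfalso
      rw [h1, h2] at hi
      have : (-1 : ℚ) = 1 := hi ▸ rfl
      norm_num at this
    · exfalso
      rw [h1, h2] at hi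
      have : (-1 : ℚ) = 1 := hi.symm ▸ rfl
      norm_num at this
    · rw [h1, h2]
  exact Finite.of_injective f hf

lemma ev_surjective : Function.Surjective (ev G) := by
  have : Finite (Sol G) := finite_sol
  have : Fintype (Sol G) := Fintype.ofFinite _
  intro f
  refine ⟨∑ v : Sol G, C (f v) * chi v.1, ?_⟩
  funext w
  rw [show ev G (∑ v : Sol G, C (f v) * chi v.1) w
      = aeval w.1 (∑ v : Sol G, C (f v) * chi v.1) from rfl]
  rw [map_sum]
  rw [Finset.sum_eq_single_of_mem w (Finset.mem_univ w)]
  · rw [_root_.map_mul, aeval_C, aeval_chi_self (sol_pm w), mul_one]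
    simp
  · intro v _ hvw
    rw [_root_.map_mul, aeval_C,
      aeval_chi_ne (sol_pm v) (sol_pm w) (fun hc => hvw (Subtype.ext hc)), mul_zero]

lemma finrank_eq_card :
    Module.finrank ℚ (MvPolynomial (G × G) ℚ ⧸ hadamardIdeal G) = Nat.card (Sol G) := by
  have : Finite (Sol G) := finite_sol
  have : Fintype (Sol G) := Fintype.ofFinite _
  have e : (MvPolynomial (G × G) ℚ ⧸ RingHom.ker (ev G)) ≃ₐ[ℚ] (Sol G → ℚ) :=
    Ideal.quotientKerAlgEquivOfSurjective ev_surjective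
  rw [hadamardIdeal_eq, ← ker_ev, e.toLinearEquiv.finrank_eq, Module.finrank_pi,
    Nat.card_eq_fintype_card]


lemma sol_sq (v : Sol G) (i : G × G) : v.1 i ^ 2 = 1 := by
  rcases sol_pm v i with h | h <;> rw [h] <;> norm_num

lemma sol_norm_row (v : Sol G) {j : G} (hj : j ≠ 1) : v.1 (1, j) = 1 := by
  have h := v.2 _ (mem_gen2 hj)
  simpa [sub_eq_zero] using h

lemma sol_norm_col (v : Sol G) {i : G} (hi : i ≠ 1) : v.1 (i, 1) = 1 := by
  have h := v.2 _ (mem_gen3 hi)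
  simpa [sub_eq_zero] using h

lemma sol_coc (v : Sol G) (i j k : G) :
    v.1 (i, j) = v.1 (i * j, k) * v.1 (j, k) * v.1 (i, j * k) := by
  have h := v.2 _ (mem_gen4 i j k)
  simpa [sub_eq_zero] using h

lemma sol_sum (v : Sol G) {i : G} (hi : i ≠ 1) : ∑ j : G, v.1 (i, j) = 0 := by
  have h := v.2 _ (mem_gen5 hi)
  simpa using h

lemma sol_one_one (v : Sol G) (hG : ∃ k : G, k ≠ 1) : v.1 (1, 1) = 1 := by
  obtain ⟨k, hk⟩ := hG
  have h := sol_coc v 1 1 k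
  rw [one_mul, one_mul, sol_norm_row v hk] at h
  simpa using h


lemma toSol (t : ℕ) (ψ : G → G → ℤ)
    (hpm : ∀ g h : G, ψ g h = 1 ∨ ψ g h = -1)
    (hcoc : ∀ g h k : G, ψ g h * ψ (g * h) k = ψ h k * ψ g (h * k))
    (hnorm : ∀ g : G, ψ 1 g = 1 ∧ ψ g 1 = 1)
    (hH : (Matrix.of ψ) * (Matrix.of ψ)ᵀ = (4 * t : ℤ) • (1 : Matrix G G ℤ)) :
    ∀ p ∈ genSet G, aeval (fun ij : G × G => ((ψ ij.1 ij.2 : ℤ) : ℚ)) p = 0 := by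
  intro p hp
  have hsq : ∀ a b : G, ψ a b ^ 2 = 1 := by
    intro a b; rcases hpm a b with h | h <;> rw [h] <;> norm_num
  rcases hp with (((hp | hp) | hp) | hp) | hp
  · obtain ⟨i, j, rfl⟩ := hp
    simp only [map_sub, map_pow, aeval_X, _root_.map_one, sub_eq_zero]
    exact_mod_cast hsq i j
  · obtain ⟨j, hj, rfl⟩ := hp
    simp only [map_sub, aeval_X, _root_.map_one, sub_eq_zero]
    exact_mod_cast (hnorm j).1
  · obtain ⟨i, hi, rfl⟩ := hp
    simp only [map_sub, aeval_X, _root_.map_one, sub_eq_zero]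
    exact_mod_cast (hnorm i).2
  · obtain ⟨i, j, k, rfl⟩ := hp
    simp only [map_sub, _root_.map_mul, aeval_X, sub_eq_zero]
    have hz : ψ i j = ψ (i * j) k * ψ j k * ψ i (j * k) := by
      linear_combination ψ (i * j) k * hcoc i j k - ψ i j * hsq (i * j) k
    exact_mod_cast hz
  · obtain ⟨i, hi, rfl⟩ := hp
    rw [map_sum]
    simp only [aeval_X]
    have h1 := Matrix.ext_iff.mpr hH i 1
    rw [Matrix.mul_apply] at h1
    simp only [Matrix.transpose_apply, Matrix.of_apply, Matrix.smul_apply,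
      Matrix.one_apply_ne hi, smul_zero] at h1
    have h2 : ∀ k : G, ψ 1 k = 1 := fun k => (hnorm k).1
    have h0 : ∑ j : G, ψ i j = 0 := by
      rw [← h1]
      exact Finset.sum_congr rfl fun k _ => by rw [h2 k, mul_one]
    exact_mod_cast h0

lemma ofSol (t : ℕ) (hcard : Fintype.card G = 4 * t) (v : Sol G) (hG : ∃ k : G, k ≠ 1)
    (ψ : G → G → ℤ) (hψ : ∀ g h : G, ψ g h = if v.1 (g, h) = 1 then 1 else -1) :
    (∀ g h : G, ψ g h = 1 ∨ ψ g h = -1) ∧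
    (∀ g h k : G, ψ g h * ψ (g * h) k = ψ h k * ψ g (h * k)) ∧
    (∀ g : G, ψ 1 g = 1 ∧ ψ g 1 = 1) ∧
    (Matrix.of ψ) * (Matrix.of ψ)ᵀ = (4 * t : ℤ) • (1 : Matrix G G ℤ) := by
  have hpm : ∀ g h, ψ g h = 1 ∨ ψ g h = -1 := fun g h => by rw [hψ]; split <;> simp
  have hcast : ∀ g h : G, ((ψ g h : ℤ) : ℚ) = v.1 (g, h) := by
    intro g h
    rcases sol_pm v (g, h) with h1 | h1
    · rw [hψ, if_pos h1, h1]; norm_num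
    · rw [hψ, if_neg (by rw [h1]; norm_num), h1]; norm_num
  have hsqv : ∀ i : G × G, v.1 i ^ 2 = 1 := sol_sq v
  have hcoc : ∀ g h k : G, ψ g h * ψ (g * h) k = ψ h k * ψ g (h * k) := by
    intro g h k
    have hq : (↑(ψ g h * ψ (g * h) k) : ℚ) = ↑(ψ h k * ψ g (h * k)) := by
      push_cast
      simp only [hcast]
      linear_combination v.1 (g * h, k) * sol_coc v g h k +
        v.1 (h, k) * v.1 (g, h * k) * hsqv (g * h, k)
    exact_mod_cast hq
  have hnorm : ∀ g : G, ψ 1 g = 1 ∧ ψ g 1 = 1 := by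
    intro g
    by_cases hg : g = 1
    · subst hg
      have h11 := sol_one_one v hG
      exact ⟨by rw [hψ, if_pos h11], by rw [hψ, if_pos h11]⟩
    · exact ⟨by rw [hψ, if_pos (sol_norm_row v hg)], by rw [hψ, if_pos (sol_norm_col v hg)]⟩
  have hsum : ∀ d : G, d ≠ 1 → ∑ m : G, ψ d m = 0 := by
    intro d hd
    have hq : ((∑ m : G, ψ d m : ℤ) : ℚ) = 0 := by
      push_cast
      rw [show (∑ m : G, ((ψ d m : ℤ) : ℚ)) = ∑ m : G, v.1 (d, m) from
        Finset.sum_congr rfl fun m _ => hcast d m]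
      exact sol_sum v hd
    exact_mod_cast hq
  have hsqψ : ∀ a b : G, ψ a b ^ 2 = 1 := fun a b => by
    rcases hpm a b with h | h <;> rw [h] <;> norm_num
  refine ⟨hpm, hcoc, hnorm, ?_⟩
  ext g h
  rw [Matrix.mul_apply]
  simp only [Matrix.transpose_apply, Matrix.of_apply, Matrix.smul_apply, Matrix.one_apply,
    smul_eq_mul]
  by_cases hgh : g = h
  · subst hgh
    rw [if_pos rfl, mul_one]
    have hone : ∀ k : G, ψ g k * ψ g k = 1 := fun k => by
      rcases hpm g k with h | h <;> rw [h] <;> norm_num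
    rw [Finset.sum_congr rfl fun k _ => hone k, Finset.sum_const, Finset.card_univ, hcard]
    ring
  · rw [if_neg hgh, mul_zero]
    set d := g * h⁻¹ with hd'
    have hd : d ≠ 1 := fun hc => hgh (mul_inv_eq_one.mp hc)
    have hdh : d * h = g := inv_mul_cancel_right g h
    have key : ∀ k : G, ψ g k * ψ h k = ψ d h * ψ d (h * k) := by
      intro k
      have E := hcoc d h k
      rw [hdh] at E
      linear_combination ψ d h * ψ h k * E - ψ g k * ψ h k * hsqψ d h +
        ψ d h * ψ d (h * k) * hsqψ h k
    rw [Finset.sum_congr rfl fun k _ => key k, ← Finset.mul_sum]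
    rw [show (∑ k : G, ψ d (h * k)) = ∑ m : G, ψ d m from
      Fintype.sum_equiv (Equiv.mulLeft h) _ _ (fun k => rfl)]
    rw [hsum d hd, mul_zero]

lemma card_eq (t : ℕ) (hcard : Fintype.card G = 4 * t) :
    Nat.card {ψ : G → G → ℤ //
        (∀ g h : G, ψ g h = 1 ∨ ψ g h = -1) ∧
        (∀ g h k : G, ψ g h * ψ (g * h) k = ψ h k * ψ g (h * k)) ∧
        (∀ g : G, ψ 1 g = 1 ∧ ψ g 1 = 1) ∧
        (Matrix.of ψ) * (Matrix.of ψ)ᵀ = (4 * t : ℤ) • (1 : Matrix G G ℤ)} =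
      Nat.card (Sol G) := by
  have hG : ∃ k : G, k ≠ 1 := by
    have h0 : 0 < Fintype.card G := Fintype.card_pos
    have h1 : 1 < Fintype.card G := by omega
    obtain ⟨k, hk⟩ := Fintype.exists_ne_of_one_lt_card h1 1
    exact ⟨k, hk⟩
  apply Nat.card_congr
  refine Equiv.mk
    (fun ψ => ⟨fun ij => ((ψ.1 ij.1 ij.2 : ℤ) : ℚ),
      toSol t ψ.1 ψ.2.1 ψ.2.2.1 ψ.2.2.2.1 ψ.2.2.2.2⟩)
    (fun v => ⟨fun g h => if v.1 (g, h) = 1 then 1 else -1,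
      ofSol t hcard v hG _ (fun g h => rfl)⟩) ?_ ?_
  · intro ψ
    apply Subtype.ext
    funext g h
    dsimp only
    rcases ψ.2.1 g h with h1 | h1 <;> simp only [h1] <;> norm_num
  · intro v
    apply Subtype.ext
    funext ij
    dsimp only
    rw [Prod.mk.eta]
    rcases sol_pm v ij with h1 | h1 <;> rw [h1] <;> norm_num

end HadamardAux

theorem card_cocyclic_hadamard_eq_finrank {G : Type*} [Group G] [Fintype G] [DecidableEq G]
    (t : ℕ) (hcard : Fintype.card G = 4 * t) :
    Nat.card {ψ : G → G → ℤ //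
        (∀ g h : G, ψ g h = 1 ∨ ψ g h = -1) ∧
        (∀ g h k : G, ψ g h * ψ (g * h) k = ψ h k * ψ g (h * k)) ∧
        (∀ g : G, ψ 1 g = 1 ∧ ψ g 1 = 1) ∧
        (Matrix.of ψ) * (Matrix.of ψ)ᵀ = (4 * t : ℤ) • (1 : Matrix G G ℤ)} =
      Module.finrank ℚ (MvPolynomial (G × G) ℚ ⧸ hadamardIdeal G) := by
  rw [HadamardAux.card_eq t hcard, ← HadamardAux.finrank_eq_card]
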